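/- Let γ : [0, L] → ℝ² be a unit-speed curve with γ(0) = 0, γ'(0) = (1,0), and whose unit tangent γ' is 1-Lipschitz into the unit circle. Then for 0 < s < π, the angle between γ'(0) and the ray from γ(0) to γ(s) is at most s/2; equivalently, writing γ(s) = (x(s), y(s)), one has y(s)/x(s) ≤ tan(s/2). -/

import Mathlib

open Real

/-- Every unit vector in the plane is `(cos α, sin α)` for some `α` with `|α| ≤ π`. -/
lemma angle_of_unit (p : ℝ × ℝ) (h : p.1 ^ 2 + p.2 ^ 2 = 1) :
    ∃ α : ℝ, |α| ≤ π ∧ Real.cos α = p.1 ∧ Real.sin α = p.2 := by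
  have h1 : -1 ≤ p.1 := by nlinarith [sq_nonneg p.2]
  have h2 : p.1 ≤ 1 := by nlinarith [sq_nonneg p.2]
  rcases le_or_gt 0 p.2 with hs | hs
  · refine ⟨Real.arccos p.1, ?_, Real.cos_arccos h1 h2, ?_⟩
    · rw [abs_of_nonneg (Real.arccos_nonneg _)]; exact Real.arccos_le_pi _
    · rw [Real.sin_arccos, show (1:ℝ) - p.1 ^ 2 = p.2 ^ 2 by linarith]
      exact Real.sqrt_sq hs
  · refine ⟨-Real.arccos p.1, ?_, by rw [Real.cos_neg]; exact Real.cos_arccos h1 h2, ?_⟩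
    · rw [abs_neg, abs_of_nonneg (Real.arccos_nonneg _)]; exact Real.arccos_le_pi _
    · rw [Real.sin_neg, Real.sin_arccos, show (1:ℝ) - p.1 ^ 2 = p.2 ^ 2 by linarith,
        Real.sqrt_sq_eq_abs, abs_of_nonpos hs.le]
      ring

/-- Key pointwise estimate: the two contributions at parameters `a - u` and `a + u`
to the integral of `sin a * x' - cos a * y'` have nonnegative sum. -/
lemma pair_nonneg (a u : ℝ) (p q : ℝ × ℝ)
    (hu0 : 0 ≤ u) (hua : u ≤ a) (has : 2 * a < π)
    (hp : p.1 ^ 2 + p.2 ^ 2 = 1) (hq : q.1 ^ 2 + q.2 ^ 2 = 1)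
    (hp1 : Real.cos (a - u) ≤ p.1) (hq1 : Real.cos (a + u) ≤ q.1)
    (hpq : Real.cos (2 * u) ≤ p.1 * q.1 + p.2 * q.2) :
    0 ≤ Real.sin a * (p.1 + q.1) - Real.cos a * (p.2 + q.2) := by
  have hπ := Real.pi_pos
  obtain ⟨α, hα, hcα, hsα⟩ := angle_of_unit p hp
  obtain ⟨β, hβ, hcβ, hsβ⟩ := angle_of_unit q hq
  have habs : ∀ θ δ : ℝ, |θ| ≤ π → 0 ≤ δ → δ ≤ π → Real.cos δ ≤ Real.cos θ → |θ| ≤ δ := by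
    intro θ δ h1 h2 h3 h4
    by_contra hlt
    push_neg at hlt
    have := Real.cos_lt_cos_of_nonneg_of_le_pi h2 h1 hlt
    rw [Real.cos_abs] at this
    linarith
  have hαa : |α| ≤ a - u :=
    habs α (a - u) hα (by linarith) (by linarith) (by rw [hcα]; exact hp1)
  have hβa : |β| ≤ a + u :=
    habs β (a + u) hβ (by linarith) (by linarith) (by rw [hcβ]; exact hq1)
  have hαβpi : |α - β| ≤ π := by
    have h1 : |α - β| ≤ |α| + |β| := by
      have := abs_add_le α (-β)
      rw [abs_neg] at this
      simpa [sub_eq_add_neg] using this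
    have h2 := abs_le.mp hαa
    have h3 := abs_le.mp hβa
    have h4 : 0 ≤ |α| := abs_nonneg _
    have h5 : 0 ≤ |β| := abs_nonneg _
    linarith
  have hαβ : |α - β| ≤ 2 * u := by
    apply habs _ _ hαβpi (by linarith) (by linarith)
    rw [Real.cos_sub, hcα, hcβ, hsα, hsβ]
    exact hpq
  have hαa' := abs_le.mp hαa
  have hβa' := abs_le.mp hβa
  have hαβ' := abs_le.mp hαβ
  -- rewrite the goal as sin (a - α) + sin (a - β)
  have expand : Real.sin a * (p.1 + q.1) - Real.cos a * (p.2 + q.2)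
      = Real.sin (a - α) + Real.sin (a - β) := by
    rw [Real.sin_sub, Real.sin_sub, hcα, hcβ, hsα, hsβ]; ring
  rw [expand]
  set m := a - (α + β) / 2 with hm
  set d := (β - α) / 2 with hd
  have e1 : Real.sin (a - α) = Real.sin m * Real.cos d + Real.cos m * Real.sin d := by
    rw [show a - α = m + d by rw [hm, hd]; ring, Real.sin_add]
  have e2 : Real.sin (a - β) = Real.sin m * Real.cos d - Real.cos m * Real.sin d := by
    rw [show a - β = m - d by rw [hm, hd]; ring, Real.sin_sub]
  have hm0 : 0 ≤ m := by rw [hm]; cases hαa'; cases hαβ'; linarith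
  have hmπ : m ≤ π := by rw [hm]; cases hαa'; cases hαβ'; linarith
  have hsinm : 0 ≤ Real.sin m := Real.sin_nonneg_of_nonneg_of_le_pi hm0 hmπ
  have hcosd : 0 ≤ Real.cos d := by
    apply Real.cos_nonneg_of_mem_Icc
    constructor
    · rw [hd]; cases hαβ'; linarith
    · rw [hd]; cases hαβ'; linarith
  rw [e1, e2]
  linarith [mul_nonneg hsinm hcosd]

set_option maxHeartbeats 1600000 in
/-- The angle between the initial tangent `γ'(0) = (1,0)` and the ray from `γ(0) = 0`
to `γ(s)` is at most `s/2`; equivalently the slope `y(s)/x(s)` is at most `tan (s/2)`. -/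
theorem slope_bound
    (L : ℝ) (γ γ' : ℝ → ℝ × ℝ)
    (hderiv : ∀ t ∈ Set.Icc (0:ℝ) L, HasDerivAt γ (γ' t) t)
    (hunit : ∀ t ∈ Set.Icc (0:ℝ) L, (γ' t).1 ^ 2 + (γ' t).2 ^ 2 = 1)
    (hlip : ∀ t s : ℝ, t ∈ Set.Icc (0:ℝ) L → s ∈ Set.Icc (0:ℝ) L → t ≤ s → s - t ≤ π →
      Real.cos (s - t) ≤ (γ' s).1 * (γ' t).1 + (γ' s).2 * (γ' t).2)
    (hγ0 : γ 0 = (0, 0)) (hγ'0 : γ' 0 = (1, 0))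
    (s : ℝ) (hs0 : 0 < s) (hsπ : s < π) (hsL : s ≤ L) :
    (γ s).2 / (γ s).1 ≤ Real.tan (s / 2) := by
  have hLpos : (0:ℝ) ≤ L := le_trans hs0.le hsL
  have h0mem : (0:ℝ) ∈ Set.Icc (0:ℝ) L := ⟨le_refl 0, hLpos⟩
  have hsub : Set.Icc (0:ℝ) s ⊆ Set.Icc (0:ℝ) L := Set.Icc_subset_Icc le_rfl hsL
  -- x'(t) ≥ cos t for t in [0, s]
  have hx' : ∀ t ∈ Set.Icc (0:ℝ) s, Real.cos t ≤ (γ' t).1 := by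
    intro t ht
    have h := hlip 0 t h0mem (hsub ht) ht.1 (by simpa using le_trans ht.2 hsπ.le)
    rw [hγ'0] at h
    simpa using h
  -- component derivatives
  have hdx : ∀ t ∈ Set.Icc (0:ℝ) L, HasDerivAt (fun u => (γ u).1) ((γ' t).1) t :=
    fun t ht => (hderiv t ht).fst
  have hdy : ∀ t ∈ Set.Icc (0:ℝ) L, HasDerivAt (fun u => (γ u).2) ((γ' t).2) t :=
    fun t ht => (hderiv t ht).snd
  -- F t = x t - sin t is monotone on [0, s], giving x(s) ≥ sin s > 0
  have hFmono : MonotoneOn (fun t => (γ t).1 - Real.sin t) (Set.Icc 0 s) := by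
    apply monotoneOn_of_deriv_nonneg (convex_Icc 0 s)
    · exact ContinuousOn.sub
        (fun t ht => ((hdx t (hsub ht)).continuousAt).continuousWithinAt)
        (Real.continuous_sin.continuousOn)
    · intro t ht
      rw [interior_Icc] at ht
      exact (((hdx t (hsub ⟨ht.1.le, ht.2.le⟩)).sub
        (Real.hasDerivAt_sin t))).differentiableAt.differentiableWithinAt
    · intro t ht
      rw [interior_Icc] at ht
      have hd := (hdx t (hsub ⟨ht.1.le, ht.2.le⟩)).sub (Real.hasDerivAt_sin t)
      rw [show deriv (fun t => (γ t).1 - Real.sin t) t = (γ' t).1 - Real.cos t from hd.deriv]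
      have := hx' t ⟨ht.1.le, ht.2.le⟩
      linarith
  have hmem0 : (0:ℝ) ∈ Set.Icc (0:ℝ) s := ⟨le_rfl, hs0.le⟩
  have hmems : s ∈ Set.Icc (0:ℝ) s := ⟨hs0.le, le_rfl⟩
  have hxge : Real.sin s ≤ (γ s).1 := by
    have := hFmono hmem0 hmems hs0.le
    simp [hγ0] at this
    linarith
  have hsins : 0 < Real.sin s := Real.sin_pos_of_pos_of_lt_pi hs0 hsπ
  have hxpos : 0 < (γ s).1 := lt_of_lt_of_le hsins hxge
  -- γ' is 1-Lipschitz componentwise on [0, s]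
  have hsq : ∀ t ∈ Set.Icc (0:ℝ) s, ∀ t' ∈ Set.Icc (0:ℝ) s, t ≤ t' →
      ((γ' t').1 - (γ' t).1) ^ 2 + ((γ' t').2 - (γ' t).2) ^ 2 ≤ (t' - t) ^ 2 := by
    intro t ht t' ht' htt
    have hdot := hlip t t' (hsub ht) (hsub ht') htt (by linarith [ht.1, ht'.2])
    have hu1 := hunit t (hsub ht)
    have hu2 := hunit t' (hsub ht')
    -- 2 - 2 cos θ ≤ θ² for θ ≥ 0
    have hθ : 2 - 2 * Real.cos (t' - t) ≤ (t' - t) ^ 2 := by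
      have h1 : Real.cos (t' - t) = 1 - 2 * Real.sin ((t' - t) / 2) ^ 2 := by
        have := Real.cos_sq ((t' - t) / 2)
        have h2 : Real.sin ((t'-t)/2) ^ 2 + Real.cos ((t'-t)/2) ^ 2 = 1 :=
          Real.sin_sq_add_cos_sq _
        rw [show 2 * ((t' - t) / 2) = t' - t by ring] at this
        linarith
      have h3 : Real.sin ((t' - t) / 2) ≤ (t' - t) / 2 := Real.sin_le (by linarith)
      have h4 : 0 ≤ Real.sin ((t' - t) / 2) ∨ Real.sin ((t'-t)/2) < 0 := le_or_gt _ _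
      have h5 : Real.sin ((t' - t) / 2) ^ 2 ≤ ((t' - t) / 2) ^ 2 := by
        rcases h4 with h | h
        · nlinarith
        · have hx1 : 1 ≤ (t' - t) / 2 := by
            by_contra hc
            push_neg at hc
            have : 0 ≤ Real.sin ((t' - t) / 2) :=
              Real.sin_nonneg_of_nonneg_of_le_pi (by linarith)
                (by linarith [Real.pi_gt_three])
            linarith
          nlinarith [Real.neg_one_le_sin ((t' - t) / 2)]
      · nlinarith
    nlinarith
  have hlipcomp : ∀ t ∈ Set.Icc (0:ℝ) s, ∀ t' ∈ Set.Icc (0:ℝ) s,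
      |(γ' t').1 - (γ' t).1| ≤ |t' - t| ∧ |(γ' t').2 - (γ' t).2| ≤ |t' - t| := by
    intro t ht t' ht'
    rcases le_total t t' with h | h
    · have := hsq t ht t' ht' h
      constructor <;> (rw [abs_le, abs_of_nonneg (by linarith : (0:ℝ) ≤ t' - t)]) <;>
        constructor <;> nlinarith [sq_nonneg ((γ' t').1 - (γ' t).1),
          sq_nonneg ((γ' t').2 - (γ' t).2)]
    · have := hsq t' ht' t ht h
      constructor <;> (rw [abs_sub_comm, abs_sub_comm t' t,
          abs_le, abs_of_nonneg (by linarith : (0:ℝ) ≤ t - t')]) <;>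
        constructor <;> nlinarith [sq_nonneg ((γ' t).1 - (γ' t').1),
          sq_nonneg ((γ' t).2 - (γ' t').2)]
  have hcont1 : ContinuousOn (fun t => (γ' t).1) (Set.Icc (0:ℝ) s) := by
    apply LipschitzOnWith.continuousOn (K := 1)
    rw [lipschitzOnWith_iff_dist_le_mul]
    intro x hx y hy
    rw [Real.dist_eq, Real.dist_eq]
    simpa using (hlipcomp y hy x hx).1
  have hcont2 : ContinuousOn (fun t => (γ' t).2) (Set.Icc (0:ℝ) s) := by
    apply LipschitzOnWith.continuousOn (K := 1)
    rw [lipschitzOnWith_iff_dist_le_mul]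
    intro x hx y hy
    rw [Real.dist_eq, Real.dist_eq]
    simpa using (hlipcomp y hy x hx).2
  -- the integrand
  set I : ℝ → ℝ := fun τ => Real.sin (s/2) * (γ' τ).1 - Real.cos (s/2) * (γ' τ).2 with hI
  have hIcont : ContinuousOn I (Set.Icc (0:ℝ) s) :=
    (continuousOn_const.mul hcont1).sub (continuousOn_const.mul hcont2)
  have huIcc : Set.uIcc (0:ℝ) s = Set.Icc 0 s := Set.uIcc_of_le hs0.le
  have hInt : IntervalIntegrable I MeasureTheory.volume 0 s := by
    apply ContinuousOn.intervalIntegrable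
    rwa [huIcc]
  -- FTC: ∫₀ˢ I = sin(s/2) x(s) - cos(s/2) y(s)
  have hW : ∫ τ in (0:ℝ)..s, I τ
      = Real.sin (s/2) * (γ s).1 - Real.cos (s/2) * (γ s).2 := by
    have := intervalIntegral.integral_eq_sub_of_hasDerivAt
      (f := fun τ => Real.sin (s/2) * (γ τ).1 - Real.cos (s/2) * (γ τ).2)
      (f' := I) (a := 0) (b := s) ?_ hInt
    · rw [this]
      simp [hγ0]
    · intro t ht
      rw [huIcc] at ht
      exact ((hdx t (hsub ht)).const_mul _).sub ((hdy t (hsub ht)).const_mul _)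
  -- split and fold the integral
  have hmid : Set.Icc (0:ℝ) (s/2) ⊆ Set.Icc (0:ℝ) s :=
    Set.Icc_subset_Icc le_rfl (by linarith)
  have hmid2 : Set.Icc (s/2) s ⊆ Set.Icc (0:ℝ) s :=
    Set.Icc_subset_Icc (by linarith) le_rfl
  have hInt1 : IntervalIntegrable I MeasureTheory.volume 0 (s/2) := by
    apply ContinuousOn.intervalIntegrable
    rw [Set.uIcc_of_le (by linarith : (0:ℝ) ≤ s/2)]
    exact hIcont.mono hmid
  have hInt2 : IntervalIntegrable I MeasureTheory.volume (s/2) s := by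
    apply ContinuousOn.intervalIntegrable
    rw [Set.uIcc_of_le (by linarith : s/2 ≤ s)]
    exact hIcont.mono hmid2
  have hsplit : (∫ τ in (0:ℝ)..s, I τ)
      = (∫ τ in (0:ℝ)..(s/2), I τ) + ∫ τ in (s/2)..s, I τ :=
    (intervalIntegral.integral_add_adjacent_intervals hInt1 hInt2).symm
  have hfold1 : (∫ u in (0:ℝ)..(s/2), I (s/2 - u)) = ∫ τ in (0:ℝ)..(s/2), I τ := by
    rw [intervalIntegral.integral_comp_sub_left I (s/2)]
    norm_num
  have hfold2 : (∫ u in (0:ℝ)..(s/2), I (s/2 + u)) = ∫ τ in (s/2)..s, I τ := by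
    rw [intervalIntegral.integral_comp_add_left I (s/2)]
    norm_num
  -- integrability of the folded pieces
  have hcomp1 : ContinuousOn (fun u => I (s/2 - u)) (Set.Icc (0:ℝ) (s/2)) := by
    apply (hIcont.mono hmid).comp (by fun_prop)
    intro u hu
    exact ⟨by linarith [hu.2], by linarith [hu.1]⟩
  have hcomp2 : ContinuousOn (fun u => I (s/2 + u)) (Set.Icc (0:ℝ) (s/2)) := by
    apply (hIcont.mono hmid2).comp (by fun_prop)
    intro u hu
    exact ⟨by linarith [hu.1], by linarith [hu.2]⟩
  have hcint1 : IntervalIntegrable (fun u => I (s/2 - u)) MeasureTheory.volume 0 (s/2) := by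
    apply ContinuousOn.intervalIntegrable
    rwa [Set.uIcc_of_le (by linarith : (0:ℝ) ≤ s/2)]
  have hcint2 : IntervalIntegrable (fun u => I (s/2 + u)) MeasureTheory.volume 0 (s/2) := by
    apply ContinuousOn.intervalIntegrable
    rwa [Set.uIcc_of_le (by linarith : (0:ℝ) ≤ s/2)]
  -- pointwise nonnegativity of the paired integrand
  have hpt : ∀ u ∈ Set.Icc (0:ℝ) (s/2), 0 ≤ I (s/2 - u) + I (s/2 + u) := by
    intro u hu
    have hm1 : s/2 - u ∈ Set.Icc (0:ℝ) s := ⟨by linarith [hu.2], by linarith [hu.1]⟩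
    have hm2 : s/2 + u ∈ Set.Icc (0:ℝ) s := ⟨by linarith [hu.1], by linarith [hu.2]⟩
    have hdot := hlip (s/2 - u) (s/2 + u) (hsub hm1) (hsub hm2)
      (by linarith [hu.1]) (by linarith [hu.2])
    rw [show s/2 + u - (s/2 - u) = 2 * u by ring] at hdot
    have := pair_nonneg (s/2) u (γ' (s/2 - u)) (γ' (s/2 + u)) hu.1 hu.2
      (by linarith) (hunit _ (hsub hm1)) (hunit _ (hsub hm2))
      (hx' _ hm1) (hx' _ hm2) (by linarith)
    simp only [hI]
    linarith
  have hfoldnn : 0 ≤ ∫ u in (0:ℝ)..(s/2), (I (s/2 - u) + I (s/2 + u)) :=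
    intervalIntegral.integral_nonneg (by linarith) hpt
  have hWnn : 0 ≤ Real.sin (s/2) * (γ s).1 - Real.cos (s/2) * (γ s).2 := by
    rw [← hW, hsplit, ← hfold1, ← hfold2]
    rwa [intervalIntegral.integral_add hcint1 hcint2] at hfoldnn
  -- conclude
  have hcoshalf : 0 < Real.cos (s / 2) :=
    Real.cos_pos_of_mem_Ioo ⟨by linarith [Real.pi_pos], by linarith⟩
  rw [Real.tan_eq_sin_div_cos, div_le_div_iff₀ hxpos hcoshalf]
  linarith
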